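/- The function A(z) = (1-z)^{-2} (log(e/(1-z)))^{-1} on the unit disc belongs to LMOA'' but does not belong to L_α for any α > 1; that is, sup_{0<a<1} (log(e/(1-a)))^2 (1-a)^{-1} ∫_{S_a} |A(z)|^2 (1-|z|^2)^3 dm(z) < ∞, while sup_{z∈D} |A(z)|(1-|z|^2)^2 (log(e/(1-|z|)))^α = ∞ for every α > 1. -/

import Mathlib

set_option maxHeartbeats 1000000

open Metric Set Real

/-- The function `A(z) = (1-z)^{-2} (log(e/(1-z)))^{-1}`. -/
noncomputable def funA : ℂ → ℂ :=
  fun z => ((1 - z) ^ 2)⁻¹ * (Complex.log ((Real.exp 1 : ℂ) / (1 - z)))⁻¹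

/-- The Carleson square with respect to a point `a` of the unit disc. -/
noncomputable def carlesonSq (a : ℂ) : Set ℂ :=
  if a = 0 then ball (0 : ℂ) 1 else
    {z : ℂ | ‖a‖ < ‖z‖ ∧ ‖z‖ < 1 ∧
      |Complex.arg z - Complex.arg a| ≤ (1 - ‖a‖) / 2}

open MeasureTheory

-- real integral: ∫ (b²+y²)⁻¹ dy = π/b
lemma int_inv_sq_add (b : ℝ) (hb : 0 < b) :
    Integrable (fun y : ℝ => (b^2 + y^2)⁻¹) ∧ (∫ y : ℝ, (b^2+y^2)⁻¹) = π / b := by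
  have hbne : b ≠ 0 := ne_of_gt hb
  have heq : (fun y : ℝ => (b^2 + y^2)⁻¹) = fun y : ℝ => b⁻¹^2 * (1 + (y/b)^2)⁻¹ := by
    funext y
    field_simp
  constructor
  · rw [heq]
    exact (integrable_inv_one_add_sq.comp_div hbne).const_mul _
  · rw [heq]
    rw [MeasureTheory.integral_const_mul]
    rw [MeasureTheory.Measure.integral_comp_div (fun t : ℝ => (1 + t^2)⁻¹) b]
    rw [integral_univ_inv_one_add_sq, abs_of_pos hb, smul_eq_mul]
    field_simp

-- inner lintegral bound
lemma inner_lint (b K : ℝ) (hb : 0 < b) (hb1 : b ≤ 1) (hK : 0 ≤ K) :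
    ∫⁻ y : ℝ, ENNReal.ofReal (K * b^3 * (((b^2 + y^2)^2)⁻¹)) ≤ ENNReal.ofReal (K * π) := by
  have hbne : b ≠ 0 := ne_of_gt hb
  have hpt : ∀ y : ℝ, K * b^3 * (((b^2 + y^2)^2)⁻¹) ≤ (K * b) * (b^2 + y^2)⁻¹ := by
    intro y
    have hD : 0 < b^2 + y^2 := by positivity
    have h1 : (b^2 + y^2)⁻¹ ≤ (b^2)⁻¹ := by
      apply inv_anti₀ (by positivity) (by nlinarith)
    have h2 : ((b^2 + y^2)^2)⁻¹ = (b^2+y^2)⁻¹ * (b^2+y^2)⁻¹ := by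
      rw [sq, mul_inv]
    rw [h2]
    calc K * b^3 * ((b^2+y^2)⁻¹ * (b^2+y^2)⁻¹)
        ≤ K * b^3 * ((b^2)⁻¹ * (b^2+y^2)⁻¹) := by
          apply mul_le_mul_of_nonneg_left (mul_le_mul_of_nonneg_right h1 (by positivity)) (by positivity)
      _ = (K * b) * (b^2+y^2)⁻¹ := by field_simp
  calc ∫⁻ y : ℝ, ENNReal.ofReal (K * b^3 * (((b^2 + y^2)^2)⁻¹))
      ≤ ∫⁻ y : ℝ, ENNReal.ofReal ((K * b) * (b^2 + y^2)⁻¹) :=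
        lintegral_mono fun y => ENNReal.ofReal_le_ofReal (hpt y)
    _ = ENNReal.ofReal (∫ y : ℝ, (K * b) * (b^2 + y^2)⁻¹) := by
        rw [MeasureTheory.ofReal_integral_eq_lintegral_ofReal
          (((int_inv_sq_add b hb).1).const_mul _)
          (Filter.Eventually.of_forall fun y => by positivity)]
    _ = ENNReal.ofReal (K * π) := by
        rw [MeasureTheory.integral_const_mul, (int_inv_sq_add b hb).2]
        congr 1
        field_simp

-- strip bound
lemma strip_bound (x₀ K : ℝ) (hx₀ : 0 ≤ x₀) (hK : 0 ≤ K) :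
    ∫⁻ z in {z : ℂ | x₀ < z.re ∧ z.re < 1},
        ENNReal.ofReal (K * (1-z.re)^3 * ((((1-z.re)^2+z.im^2)^2)⁻¹)) ∂volume
      ≤ ENNReal.ofReal (1 - x₀) * ENNReal.ofReal (K * π) := by
  set G : ℝ × ℝ → ENNReal :=
    fun p => ENNReal.ofReal (K * (1-p.1)^3 * ((((1-p.1)^2+p.2^2)^2)⁻¹)) with hG
  have hGm : Measurable G := by
    apply Measurable.ennreal_ofReal
    fun_prop
  have hset : {z : ℂ | x₀ < z.re ∧ z.re < 1}
      = Complex.measurableEquivRealProd ⁻¹' ((Ioo x₀ 1) ×ˢ (univ : Set ℝ)) := by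
    ext z
    simp [Complex.measurableEquivRealProd_apply, Set.mem_Ioo]
  rw [hset]
  have := Complex.volume_preserving_equiv_real_prod.setLIntegral_comp_preimage_emb
    Complex.measurableEquivRealProd.measurableEmbedding G ((Ioo x₀ 1) ×ˢ (univ : Set ℝ))
  have heqfun : (fun z : ℂ => ENNReal.ofReal (K * (1-z.re)^3 * ((((1-z.re)^2+z.im^2)^2)⁻¹)))
      = fun z => G (Complex.measurableEquivRealProd z) := rfl
  rw [heqfun, this]
  rw [MeasureTheory.Measure.volume_eq_prod, ← MeasureTheory.Measure.prod_restrict,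
    MeasureTheory.Measure.restrict_univ]
  rw [MeasureTheory.lintegral_prod _ (hGm.aemeasurable)]
  calc ∫⁻ x in Ioo x₀ 1, ∫⁻ y, G (x, y) ∂volume ∂volume
      ≤ ∫⁻ _x in Ioo x₀ 1, ENNReal.ofReal (K * π) ∂volume := by
        apply setLIntegral_mono measurable_const
        intro x hx
        simp only [mem_Ioo] at hx
        exact inner_lint (1-x) K (by linarith) (by linarith) hK
    _ = ENNReal.ofReal (1 - x₀) * ENNReal.ofReal (K * π) := by
        rw [MeasureTheory.setLIntegral_const, Real.volume_Ioo, mul_comm]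

lemma pointwise_bound (a : ℝ) (ha0 : 0 < a) (ha1 : a < 1) {L : ℝ}
    (hL : L = 1 - Real.log (1-a))
    (z : ℂ) (hz1 : a < ‖z‖) (hz2 : ‖z‖ < 1)
    (hz3 : |Complex.arg z| ≤ (1-a)/2) :
    (a * Real.cos ((1-a)/2) < z.re ∧ z.re < 1) ∧
    ‖funA z‖^2 * (1-‖z‖^2)^3 ≤ 32/L^2 * (1-z.re)^3 * ((((1-z.re)^2+z.im^2)^2)⁻¹) := by
  have hL1 : 1 ≤ L := by
    have := Real.log_nonpos (by linarith) (by linarith : 1 - a ≤ 1)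
    linarith [hL]
  have hz0 : z ≠ 0 := by
    intro h
    rw [h] at hz1; simp at hz1; linarith
  have habs0 : 0 < ‖z‖ := lt_trans ha0 hz1
  set x := z.re with hx
  set y := z.im with hy
  -- x = |z| cos θ
  have hcos : Real.cos (Complex.arg z) = x / ‖z‖ := Complex.cos_arg hz0
  have hxval : x = ‖z‖ * Real.cos (Complex.arg z) := by
    rw [hcos]; field_simp
  have hsin : Real.sin (Complex.arg z) = y / ‖z‖ := Complex.sin_arg z
  have hyval : y = ‖z‖ * Real.sin (Complex.arg z) := by
    rw [hsin]; field_simp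
  have hcosmono : Real.cos ((1-a)/2) ≤ Real.cos (Complex.arg z) := by
    rw [← Real.cos_abs (Complex.arg z)]
    apply Real.cos_le_cos_of_nonneg_of_le_pi (abs_nonneg _) _ hz3
    have := Real.pi_gt_three
    linarith
  have hcos0 : 0 ≤ Real.cos ((1-a)/2) := by
    have := Real.one_sub_sq_div_two_le_cos (x := (1-a)/2)
    nlinarith
  have hcosq : 1 - ((1-a)/2)^2/2 ≤ Real.cos ((1-a)/2) :=
    Real.one_sub_sq_div_two_le_cos
  -- x bounds
  have hcospos : 0 < Real.cos ((1-a)/2) := by nlinarith [hcosq]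
  have hxlb : a * Real.cos ((1-a)/2) < x := by
    rw [hxval]
    calc a * Real.cos ((1-a)/2) < ‖z‖ * Real.cos ((1-a)/2) :=
          mul_lt_mul_of_pos_right hz1 hcospos
      _ ≤ ‖z‖ * Real.cos (Complex.arg z) :=
          mul_le_mul_of_nonneg_left hcosmono habs0.le
  have hxub : x < 1 := lt_of_le_of_lt (Complex.re_le_norm z) hz2
  have hxle9 : 1 - x ≤ (9/8) * (1-a) := by
    nlinarith [hcosq, sq_nonneg (1-a), hxlb.le]
  have hxnn : 1 - x ≥ 0 := by linarith
  -- |y| ≤ (1-a)/2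
  have hyb : |y| ≤ (1-a)/2 := by
    rw [hyval, abs_mul, abs_of_pos habs0]
    calc ‖z‖ * |Real.sin (Complex.arg z)|
        ≤ 1 * |Complex.arg z| := by
          apply mul_le_mul hz2.le Real.abs_sin_le_abs (abs_nonneg _) zero_le_one
      _ ≤ (1-a)/2 := by rw [one_mul]; exact hz3
  -- norm squared of 1 - z
  have hnsq : (‖(1-z)‖)^2 = (1-x)^2 + y^2 := by
    rw [Complex.sq_norm, Complex.normSq_apply]
    simp [Complex.sub_re, Complex.sub_im]
    ring
  have h1z0 : (1:ℂ) - z ≠ 0 := by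
    intro h
    have : z = 1 := by linear_combination -h
    rw [this] at hz2; simp at hz2
  have habs1z : 0 < ‖(1-z)‖ := by
    exact norm_pos_iff.mpr h1z0
  have habs1zle : ‖(1-z)‖ ≤ (3/2) * (1-a) := by
    nlinarith [hnsq, habs1z, sq_abs y, hyb, abs_nonneg y]
  -- log bound
  set w : ℂ := (Real.exp 1 : ℂ) / (1 - z) with hw
  have hrelog : L/2 ≤ (Complex.log w).re := by
    rw [Complex.log_re, hw, norm_div, Complex.norm_real, Real.norm_eq_abs,
      abs_of_pos (Real.exp_pos 1)]
    rw [Real.log_div (Real.exp_ne_zero 1) (ne_of_gt habs1z), Real.log_exp]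
    have hlog32 : Real.log (3/2) ≤ 1/2 := by
      rw [Real.log_le_iff_le_exp (by norm_num)]
      nlinarith [Real.add_one_le_exp (1/2 : ℝ)]
    have hmono : Real.log (‖(1-z)‖) ≤ Real.log ((3/2)*(1-a)) :=
      Real.log_le_log habs1z habs1zle
    rw [Real.log_mul (by norm_num) (by linarith : 1 - a ≠ 0)] at hmono
    rw [hL] at hL1 ⊢
    linarith
  have hlogabs : L/2 ≤ ‖(Complex.log w)‖ := by
    calc L/2 ≤ (Complex.log w).re := hrelog
      _ ≤ |(Complex.log w).re| := le_abs_self _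
      _ ≤ ‖(Complex.log w)‖ := Complex.abs_re_le_norm _
  have hL2 : (0:ℝ) < L/2 := by linarith
  -- norm of funA
  set D : ℝ := (1-x)^2 + y^2 with hD
  have hDpos : 0 < D := by
    have h1x : 0 < 1 - x := by linarith
    nlinarith [sq_nonneg y]
  have hfA : ‖funA z‖ ≤ D⁻¹ * (2/L) := by
    rw [funA]
    rw [norm_mul, norm_inv, norm_inv, norm_pow]
    have h1 : ‖(1:ℂ) - z‖^2 = D := by
      rw [hnsq]
    rw [h1]
    apply mul_le_mul_of_nonneg_left _ (by positivity)
    rw [inv_le_comm₀ (lt_of_lt_of_le hL2 hlogabs) (by positivity)]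
    calc (2/L)⁻¹ = L/2 := by field_simp
      _ ≤ ‖(Complex.log w)‖ := hlogabs
  refine ⟨⟨hxlb, hxub⟩, ?_⟩
  have hzn : ‖z‖ = ‖z‖ := rfl
  have hnn3 : 0 ≤ 1 - ‖z‖^2 := by rw [hzn]; nlinarith
  have h2x : 1 - ‖z‖^2 ≤ 2*(1-x) := by
    rw [hzn]
    nlinarith [Complex.re_le_norm z]
  have hsq : ‖funA z‖^2 ≤ (D⁻¹*(2/L))^2 := by
    apply pow_le_pow_left₀ (norm_nonneg _) hfA
  have hcube : (1-‖z‖^2)^3 ≤ (2*(1-x))^3 := by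
    apply pow_le_pow_left₀ hnn3 h2x
  have hLne : L ≠ 0 := by linarith
  have hDne : D ≠ 0 := ne_of_gt hDpos
  calc ‖funA z‖^2 * (1-‖z‖^2)^3
      ≤ (D⁻¹*(2/L))^2 * (2*(1-x))^3 :=
        mul_le_mul hsq hcube (pow_nonneg hnn3 3) (by positivity)
    _ = 32/L^2 * (1-x)^3 * ((((1-x)^2+y^2)^2)⁻¹) := by
        rw [← hD]
        field_simp
        ring

lemma part1 (a : ℝ) (ha0 : 0 < a) (ha1 : a < 1) :
    (Real.log (Real.exp 1 / (1 - a))) ^ 2 / (1 - a) *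
      (π⁻¹ * ∫ z in carlesonSq (a : ℂ),
        ‖funA z‖ ^ 2 * (1 - ‖z‖ ^ 2) ^ 3 ∂MeasureTheory.volume) ≤ 36 := by
  have ha1' : (0:ℝ) < 1 - a := by linarith
  set L := Real.log (Real.exp 1 / (1 - a)) with hLdef
  have hL : L = 1 - Real.log (1-a) := by
    rw [hLdef, Real.log_div (Real.exp_ne_zero 1) (ne_of_gt ha1'), Real.log_exp]
  have hL1 : 1 ≤ L := by
    have := Real.log_nonpos (by linarith) (by linarith : 1 - a ≤ 1)
    linarith
  have hane : (a:ℂ) ≠ 0 := by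
    simp only [ne_eq, Complex.ofReal_eq_zero]
    exact ne_of_gt ha0
  have hSdef : carlesonSq (a:ℂ) =
      {z : ℂ | a < ‖z‖ ∧ ‖z‖ < 1 ∧ |Complex.arg z| ≤ (1-a)/2} := by
    rw [carlesonSq, if_neg hane]
    simp [Complex.norm_real, Real.norm_eq_abs, abs_of_pos ha0, Complex.arg_ofReal_of_nonneg ha0.le]
  set x₀ : ℝ := a * Real.cos ((1-a)/2) with hx₀
  have hx₀nn : 0 ≤ x₀ := by
    have h1 : 1 - ((1-a)/2)^2/2 ≤ Real.cos ((1-a)/2) := Real.one_sub_sq_div_two_le_cos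
    have hc : 0 ≤ Real.cos ((1-a)/2) := by nlinarith [sq_nonneg a]
    exact mul_nonneg ha0.le hc
  have hx₀le : 1 - x₀ ≤ (9/8) * (1-a) := by
    have h1 : 1 - ((1-a)/2)^2/2 ≤ Real.cos ((1-a)/2) := Real.one_sub_sq_div_two_le_cos
    have h2 : Real.cos ((1-a)/2) ≤ 1 := Real.cos_le_one _
    nlinarith
  set f : ℂ → ℝ := fun z => ‖funA z‖^2 * (1-‖z‖^2)^3 with hf
  set g : ℂ → ENNReal :=
    fun z => ENNReal.ofReal (32/L^2 * (1-z.re)^3 * ((((1-z.re)^2+z.im^2)^2)⁻¹)) with hg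
  have hmA : Measurable funA := by
    unfold funA
    have h1 : Measurable fun z : ℂ => (1 : ℂ) - z := measurable_const.sub measurable_id
    exact ((h1.pow_const 2).inv).mul
      ((Complex.measurable_log.comp (measurable_const.div h1)).inv)
  have hmf : Measurable f := by
    apply Measurable.mul
    · exact (hmA.norm.pow_const 2)
    · exact ((measurable_const.sub ((measurable_norm).pow_const 2)).pow_const 3)
  have hSm : MeasurableSet (carlesonSq (a:ℂ)) := by
    rw [hSdef]
    have h1 : MeasurableSet {z : ℂ | a < ‖z‖} :=
      measurableSet_lt measurable_const measurable_norm
    have h2 : MeasurableSet {z : ℂ | ‖z‖ < 1} :=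
      measurableSet_lt measurable_norm measurable_const
    have h3 : MeasurableSet {z : ℂ | |Complex.arg z| ≤ (1-a)/2} :=
      measurableSet_le Complex.measurable_arg.abs measurable_const
    exact h1.inter (h2.inter h3)
  have hnn : ∀ᵐ z ∂(volume.restrict (carlesonSq (a:ℂ))), 0 ≤ f z := by
    refine (ae_restrict_mem hSm).mono fun z hz => ?_
    rw [hSdef] at hz
    have : ‖z‖ < 1 := hz.2.1
    have hzn : ‖z‖ = ‖z‖ := rfl
    apply mul_nonneg (by positivity)
    apply pow_nonneg
    rw [hzn]; nlinarith [norm_nonneg z]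
  have hkey : ∫ z in carlesonSq (a:ℂ), f z ∂volume ≤ 36*π*(1-a)/L^2 := by
    rw [MeasureTheory.integral_eq_lintegral_of_nonneg_ae hnn
      (hmf.aestronglyMeasurable)]
    apply ENNReal.toReal_le_of_le_ofReal (by positivity)
    calc ∫⁻ z in carlesonSq (a:ℂ), ENNReal.ofReal (f z) ∂volume
        ≤ ∫⁻ z in carlesonSq (a:ℂ), g z ∂volume := by
          apply setLIntegral_mono
          · apply Measurable.ennreal_ofReal
            fun_prop
          · intro z hz
            rw [hSdef] at hz
            exact ENNReal.ofReal_le_ofReal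
              (pointwise_bound a ha0 ha1 hL z hz.1 hz.2.1 hz.2.2).2
      _ ≤ ∫⁻ z in {z : ℂ | x₀ < z.re ∧ z.re < 1}, g z ∂volume := by
          apply lintegral_mono_set
          intro z hz
          rw [hSdef] at hz
          exact (pointwise_bound a ha0 ha1 hL z hz.1 hz.2.1 hz.2.2).1
      _ ≤ ENNReal.ofReal (1 - x₀) * ENNReal.ofReal (32/L^2 * π) :=
          strip_bound x₀ (32/L^2) hx₀nn (by positivity)
      _ ≤ ENNReal.ofReal ((9/8)*(1-a)) * ENNReal.ofReal (32/L^2 * π) := by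
          apply mul_le_mul_left
          exact ENNReal.ofReal_le_ofReal hx₀le
      _ = ENNReal.ofReal (36*π*(1-a)/L^2) := by
          rw [← ENNReal.ofReal_mul (by positivity)]
          congr 1
          have hLne : L ≠ 0 := by linarith
          field_simp
          ring
  calc L^2/(1-a) * (π⁻¹ * ∫ z in carlesonSq (a:ℂ), f z ∂volume)
      ≤ L^2/(1-a) * (π⁻¹ * (36*π*(1-a)/L^2)) := by
        apply mul_le_mul_of_nonneg_left _ (by positivity)
        apply mul_le_mul_of_nonneg_left hkey (by positivity)
    _ = 36 := by
        have hLne : L ≠ 0 := by linarith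
        have hπ : π ≠ 0 := ne_of_gt Real.pi_pos
        field_simp

lemma part2 (α : ℝ) (hα : 1 < α) :
      ¬ ∃ C : ℝ, ∀ z ∈ ball (0 : ℂ) 1,
        ‖funA z‖ * (1 - ‖z‖ ^ 2) ^ 2 * (Real.log (Real.exp 1 / (1 - ‖z‖))) ^ α ≤ C := by
  rintro ⟨C, hC⟩
  set T : ℝ := (max C 0 + 1) ^ ((1:ℝ)/(α-1)) with hTdef
  have hT0 : 0 ≤ T := Real.rpow_nonneg (by positivity) _
  set M : ℝ := max T 1 with hMdef
  have hM1 : 1 ≤ M := le_max_right _ _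
  set u : ℝ := Real.exp (1 - M) with hudef
  have hu0 : 0 < u := Real.exp_pos _
  have hu1 : u ≤ 1 := by
    rw [show (1:ℝ) = Real.exp 0 by simp]
    exact Real.exp_le_exp.2 (by linarith)
  set r : ℝ := 1 - u with hrdef
  have hr0 : 0 ≤ r := by simp only [hrdef]; linarith
  have hr1 : r < 1 := by simp only [hrdef]; linarith
  have hnorm : ‖(r:ℂ)‖ = r := by
    rw [Complex.norm_real, Real.norm_eq_abs, abs_of_nonneg hr0]
  have hz : (r:ℂ) ∈ ball (0:ℂ) 1 := by
    simp only [mem_ball, dist_zero_right, hnorm]; exact hr1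
  have h1mr : (1:ℂ) - (r:ℂ) = ((u:ℝ):ℂ) := by
    rw [hrdef]; push_cast; ring
  have hlogu : Real.log u = 1 - M := by rw [hudef, Real.log_exp]
  have hL : Real.log (Real.exp 1 / u) = M := by
    rw [Real.log_div (Real.exp_ne_zero 1) (ne_of_gt hu0), Real.log_exp, hlogu]; ring
  have hfun : ‖funA (r:ℂ)‖ = (u^2)⁻¹ * M⁻¹ := by
    have hlg : Complex.log (((Real.exp 1 : ℝ):ℂ) / ((u:ℝ):ℂ)) = ((M:ℝ):ℂ) := by
      rw [← Complex.ofReal_div, ← Complex.ofReal_log (by positivity), hL]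
    rw [funA]
    simp only [h1mr, hlg]
    rw [norm_mul, norm_inv, norm_inv, norm_pow, Complex.norm_real, Complex.norm_real,
      Real.norm_eq_abs, Real.norm_eq_abs, abs_of_nonneg hu0.le, abs_of_nonneg (by linarith : (0:ℝ) ≤ M)]
  have h1r2 : 1 - ‖(r:ℂ)‖^2 = u * (1 + r) := by rw [hnorm, hrdef]; ring
  have hE := hC (r:ℂ) hz
  rw [hfun, h1r2, hnorm, show 1 - r = u by rw [hrdef]; ring, hL] at hE
  have hMpos : (0:ℝ) < M := by linarith
  have hre : (u^2)⁻¹ * M⁻¹ * (u * (1+r))^2 * M^α = (1+r)^2 * M^(α-1) := by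
    rw [show M^α = M^(α-1) * M by rw [← Real.rpow_add_one (ne_of_gt hMpos)]; ring_nf]
    field_simp
  rw [hre] at hE
  have h1 : M^(α-1) ≤ (1+r)^2 * M^(α-1) := by
    nlinarith [mul_nonneg (show (0:ℝ) ≤ 2*r + r^2 by nlinarith) (Real.rpow_nonneg hMpos.le (α-1))]
  have h2 : T^(α-1) ≤ M^(α-1) :=
    Real.rpow_le_rpow hT0 (le_max_left _ _) (by linarith)
  have h3 : T^(α-1) = max C 0 + 1 := by
    rw [hTdef, ← Real.rpow_mul (by positivity), one_div_mul_cancel (by linarith : α - 1 ≠ 0),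
      Real.rpow_one]
  have : C < max C 0 + 1 := by have := le_max_left C 0; linarith
  linarith

theorem stmt4 :
    (∃ C : ℝ, ∀ a : ℝ, 0 < a → a < 1 →
      (Real.log (Real.exp 1 / (1 - a))) ^ 2 / (1 - a) *
        (π⁻¹ * ∫ z in carlesonSq (a : ℂ),
          ‖funA z‖ ^ 2 * (1 - ‖z‖ ^ 2) ^ 3 ∂MeasureTheory.volume) ≤ C) ∧
    ∀ α : ℝ, 1 < α →
      ¬ ∃ C : ℝ, ∀ z ∈ ball (0 : ℂ) 1,
        ‖funA z‖ * (1 - ‖z‖ ^ 2) ^ 2 * (Real.log (Real.exp 1 / (1 - ‖z‖))) ^ α ≤ C := by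
  exact ⟨⟨36, fun a h1 h2 => part1 a h1 h2⟩, fun α hα => part2 α hα⟩
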